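/- Let k be a field, p, q, r, s nonnegative integers, A = k[X]/(X^p), B = k[Y]/(Y^q), and let x, y denote the images of X, Y in A tensor_k B. Set u = x - y. Then x^r * y^s is divisible by u in A tensor_k B if and only if r + s >= min(p, q). -/

import Mathlib

set_option maxHeartbeats 1000000
set_option synthInstance.maxHeartbeats 1000000

open TensorProduct Polynomial

lemma mk_X_pow_eq_zero (k : Type*) [CommRing k] (p r : ℕ) (h : p ≤ r) :
    (Ideal.Quotient.mk (Ideal.span {(X : Polynomial k) ^ p}) X) ^ r = 0 := by
  rw [← map_pow, Ideal.Quotient.eq_zero_iff_mem, Ideal.mem_span_singleton]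
  exact pow_dvd_pow X h

lemma key (k : Type*) [Field k] (p q r s : ℕ) (hle : p ≤ r + s) :
    ((Ideal.Quotient.mk (Ideal.span {(X : Polynomial k) ^ p}) X ⊗ₜ[k]
        (1 : Polynomial k ⧸ Ideal.span {(X : Polynomial k) ^ q})) -
      ((1 : Polynomial k ⧸ Ideal.span {(X : Polynomial k) ^ p}) ⊗ₜ
        Ideal.Quotient.mk (Ideal.span {(X : Polynomial k) ^ q}) X)) ∣
    (Ideal.Quotient.mk (Ideal.span {(X : Polynomial k) ^ p}) X ⊗ₜ[k]
        (1 : Polynomial k ⧸ Ideal.span {(X : Polynomial k) ^ q})) ^ r *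
    ((1 : Polynomial k ⧸ Ideal.span {(X : Polynomial k) ^ p}) ⊗ₜ
        Ideal.Quotient.mk (Ideal.span {(X : Polynomial k) ^ q}) X) ^ s := by
  set x := (Ideal.Quotient.mk (Ideal.span {(X : Polynomial k) ^ p}) X ⊗ₜ[k]
        (1 : Polynomial k ⧸ Ideal.span {(X : Polynomial k) ^ q})) with hxdef
  set y := ((1 : Polynomial k ⧸ Ideal.span {(X : Polynomial k) ^ p}) ⊗ₜ[k]
        Ideal.Quotient.mk (Ideal.span {(X : Polynomial k) ^ q}) X) with hydef
  have hx : x ^ (r + s) = 0 := by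
    rw [hxdef, Algebra.TensorProduct.tmul_pow, one_pow, mk_X_pow_eq_zero k p (r+s) hle,
      TensorProduct.zero_tmul]
  obtain ⟨d, hd⟩ := sub_dvd_pow_sub_pow x y s
  exact ⟨-(x ^ r * d), by linear_combination hx - x ^ r * hd⟩

theorem stmt_3 (k : Type*) [Field k] (p q r s : ℕ) :
    let A := Polynomial k ⧸ Ideal.span {(X : Polynomial k) ^ p}
    let B := Polynomial k ⧸ Ideal.span {(X : Polynomial k) ^ q}
    let x : A ⊗[k] B := (Ideal.Quotient.mk _ X) ⊗ₜ 1
    let y : A ⊗[k] B := 1 ⊗ₜ (Ideal.Quotient.mk _ X)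
    ((x - y) ∣ x ^ r * y ^ s) ↔ min p q ≤ r + s := by
  intro A B x y
  constructor
  · intro h
    have hm : ∀ t, min p q ≤ t → ∀ a ∈ Ideal.span {(X : Polynomial k) ^ t},
        (Ideal.Quotient.mkₐ k (Ideal.span {(X : Polynomial k) ^ min p q})) a = 0 := by
      intro t ht a ha
      rw [Ideal.mem_span_singleton] at ha
      obtain ⟨c, rfl⟩ := ha
      rw [map_mul, Ideal.Quotient.mkₐ_eq_mk, Ideal.Quotient.eq_zero_iff_mem.mpr, zero_mul]
      rw [Ideal.mem_span_singleton]
      exact pow_dvd_pow X ht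
    set fA := Ideal.Quotient.liftₐ (Ideal.span {(X : Polynomial k) ^ p})
        (Ideal.Quotient.mkₐ k (Ideal.span {(X : Polynomial k) ^ min p q}))
        (hm p (min_le_left p q)) with hfA
    set fB := Ideal.Quotient.liftₐ (Ideal.span {(X : Polynomial k) ^ q})
        (Ideal.Quotient.mkₐ k (Ideal.span {(X : Polynomial k) ^ min p q}))
        (hm q (min_le_right p q)) with hfB
    set φ := Algebra.TensorProduct.lift fA fB (fun a b => Commute.all _ _) with hφ
    have hdvd := map_dvd φ h
    have hx : φ x = Ideal.Quotient.mk (Ideal.span {(X : Polynomial k) ^ min p q}) X := by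
      show φ ((Ideal.Quotient.mk _ X) ⊗ₜ 1) = _
      rw [hφ, Algebra.TensorProduct.lift_tmul, map_one, mul_one, hfA,
        Ideal.Quotient.liftₐ_apply]
      rfl
    have hy : φ y = Ideal.Quotient.mk (Ideal.span {(X : Polynomial k) ^ min p q}) X := by
      show φ ((1 : A) ⊗ₜ (Ideal.Quotient.mk _ X)) = _
      rw [hφ, Algebra.TensorProduct.lift_tmul, map_one, one_mul, hfB,
        Ideal.Quotient.liftₐ_apply]
      rfl
    rw [map_sub, map_mul, map_pow, map_pow, hx, hy, sub_self, zero_dvd_iff, ← pow_add,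
      ← map_pow, Ideal.Quotient.eq_zero_iff_mem, Ideal.mem_span_singleton] at hdvd
    have hdeg := Polynomial.natDegree_le_of_dvd hdvd (pow_ne_zero _ X_ne_zero)
    simpa using hdeg
  · intro h
    rcases min_le_iff.mp h with hp | hq
    · exact key k p q r s hp
    · have h2 := key k q p s r (by omega)
      have := map_dvd (Algebra.TensorProduct.comm k _ _ :
        (Polynomial k ⧸ Ideal.span {(X : Polynomial k) ^ q}) ⊗[k]
          (Polynomial k ⧸ Ideal.span {(X : Polynomial k) ^ p}) ≃ₐ[k] _).toAlgHom h2
      simp only [map_sub, map_mul, map_pow, Algebra.TensorProduct.comm_tmul,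
        AlgEquiv.toAlgHom_eq_coe, AlgHom.coe_coe, AlgEquiv.coe_toAlgHom, Algebra.TensorProduct.comm_tmul] at this
      obtain ⟨c, hc⟩ := this
      exact ⟨-c, by linear_combination hc⟩
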